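/- Let K be a field of characteristic zero and let f = b/(c·d^λ), where λ ≥ 1 is an integer, c ∈ K[x,y] is nonzero, and b, d ∈ K[x,y,z] with d ≠ 0 and deg_z(b) < deg_z(d). Suppose: (1) σ_x^m(d) = σ_y^n(σ_z^k(d)) for some integers m, n, k with m > 0; (2) σ_y^{n_1}(d) = σ_z^{k_1}(d) for some integers n_1, k_1 with n_1 > 0; and (3) σ_x^{m_2}(c) = σ_y^{n_2}(c) for some integers m_2, n_2 with m_2 > 0. Then f has a telescoper of type (S_x, Δ_y, Δ_z). -/

import Mathlib

set_option synthInstance.maxHeartbeats 1000000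
set_option maxHeartbeats 4000000


open MvPolynomial
open scoped Classical

noncomputable section

/-- The field `K(x,y,z)` of rational functions in three variables over `K`,
realized as the fraction field of `K[x,y,z]` (`x`, `y`, `z` have indices `0`, `1`, `2`). -/
abbrev F3 (K : Type*) [Field K] := FractionRing (MvPolynomial (Fin 3) K)

/-- The canonical image of a polynomial in `K(x,y,z)`. -/
def toF3 (K : Type*) [Field K] (p : MvPolynomial (Fin 3) K) : F3 K :=
  algebraMap (MvPolynomial (Fin 3) K) (F3 K) p

/-- The rational function `x`. -/
def xv (K : Type*) [Field K] : F3 K := toF3 K (X 0)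

/-- The rational function `y`. -/
def yv (K : Type*) [Field K] : F3 K := toF3 K (X 1)

/-- The rational function `z`. -/
def zv (K : Type*) [Field K] : F3 K := toF3 K (X 2)

/-- `a` is an element of `K(x,y)[z]` (polynomial in `z` with coefficients in `K(x,y)`)
whose degree in `z` is `< N`: it can be written as `p/q` with `q ∈ K[x,y] \ {0}` and
`deg_z p < N`. -/
def MemKxyPolyZLt (K : Type*) [Field K] (a : F3 K) (N : ℕ) : Prop :=
  ∃ p q : MvPolynomial (Fin 3) K, q ≠ 0 ∧
    q ∈ MvPolynomial.supported K ({0, 1} : Set (Fin 3)) ∧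
    p.degreeOf 2 < N ∧ a = toF3 K p / toF3 K q

/-- `f` is `(Δ_y, Δ_z)`-exact: `f = Δ_y g + Δ_z h` for some `g, h ∈ K(x,y,z)`. -/
def ExactYZ (K : Type*) [Field K] (σy σz : F3 K ≃ₐ[K] F3 K) (f : F3 K) : Prop :=
  ∃ g h : F3 K, f = (σy g - g) + (σz h - h)

/-- `f` has a telescoper of type `(S_x, Δ_y, Δ_z)`: there are `e 0, …, e ρ ∈ K(x)`,
not all zero, and `g, h ∈ K(x,y,z)` with `∑ i, e i · σ_x^i f = Δ_y g + Δ_z h`. -/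
def HasTelescoperSxΔyΔz (K : Type*) [Field K] (σx σy σz : F3 K ≃ₐ[K] F3 K)
    (f : F3 K) : Prop :=
  ∃ (ρ : ℕ) (e : Fin (ρ + 1) → F3 K),
    (∀ i, e i ∈ IntermediateField.adjoin K {xv K}) ∧ (∃ i, e i ≠ 0) ∧
    ∃ g h : F3 K,
      ∑ i : Fin (ρ + 1), e i * (σx ^ (i : ℕ)) f = (σy g - g) + (σz h - h)

namespace TeleAux

variable {K : Type*} [Field K]

/-- Shift `x ↦ x+a, y ↦ y+b, z ↦ z+c` on polynomials. -/
def Pm (a b c : ℤ) : MvPolynomial (Fin 3) K →ₐ[K] MvPolynomial (Fin 3) K :=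
  aeval ![X 0 + C (a : K), X 1 + C (b : K), X 2 + C (c : K)]

lemma Pm_X0 (a b c : ℤ) : (Pm a b c : MvPolynomial (Fin 3) K →ₐ[K] _) (X 0) = X 0 + C (a : K) := by
  simp [Pm]
lemma Pm_X1 (a b c : ℤ) : (Pm a b c : MvPolynomial (Fin 3) K →ₐ[K] _) (X 1) = X 1 + C (b : K) := by
  simp [Pm]
lemma Pm_X2 (a b c : ℤ) : (Pm a b c : MvPolynomial (Fin 3) K →ₐ[K] _) (X 2) = X 2 + C (c : K) := by
  simp [Pm]

lemma Pm_congr {a b c a' b' c' : ℤ} (ha : a = a') (hb : b = b') (hc : c = c')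
    (p : MvPolynomial (Fin 3) K) : Pm a b c p = Pm a' b' c' p := by
  subst ha; subst hb; subst hc; rfl

lemma Pm_comp (a b c a' b' c' : ℤ) (p : MvPolynomial (Fin 3) K) :
    Pm a b c (Pm a' b' c' p) = Pm (a + a') (b + b') (c + c') p := by
  have h : (Pm a b c).comp (Pm a' b' c' : MvPolynomial (Fin 3) K →ₐ[K] _)
      = Pm (a + a') (b + b') (c + c') := by
    apply algHom_ext
    intro i
    fin_cases i <;> simp [Pm, map_add, add_assoc]
  exact DFunLike.congr_fun h p

lemma Pm_zero (p : MvPolynomial (Fin 3) K) : Pm 0 0 0 p = p := by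
  have h : (Pm 0 0 0 : MvPolynomial (Fin 3) K →ₐ[K] _) = AlgHom.id K _ := by
    apply algHom_ext
    intro i
    fin_cases i <;> simp [Pm]
  rw [h]; rfl

lemma degreeOf_Pm_X_le (a b c : ℤ) (i j : Fin 3) :
    degreeOf i ((Pm a b c : MvPolynomial (Fin 3) K →ₐ[K] _) (X j)) ≤ if i = j then 1 else 0 := by
  fin_cases j
  · show degreeOf i ((Pm a b c : MvPolynomial (Fin 3) K →ₐ[K] _) (X 0)) ≤ if i = 0 then 1 else 0
    rw [Pm_X0]
    exact (degreeOf_add_le _ _ _).trans (max_le (le_of_eq (degreeOf_X i 0))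
      ((degreeOf_C _ _).trans_le (Nat.zero_le _)))
  · show degreeOf i ((Pm a b c : MvPolynomial (Fin 3) K →ₐ[K] _) (X 1)) ≤ if i = 1 then 1 else 0
    rw [Pm_X1]
    exact (degreeOf_add_le _ _ _).trans (max_le (le_of_eq (degreeOf_X i 1))
      ((degreeOf_C _ _).trans_le (Nat.zero_le _)))
  · show degreeOf i ((Pm a b c : MvPolynomial (Fin 3) K →ₐ[K] _) (X 2)) ≤ if i = 2 then 1 else 0
    rw [Pm_X2]
    exact (degreeOf_add_le _ _ _).trans (max_le (le_of_eq (degreeOf_X i 2))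
      ((degreeOf_C _ _).trans_le (Nat.zero_le _)))

lemma degreeOf_Pm_le (a b c : ℤ) (i : Fin 3) (p : MvPolynomial (Fin 3) K) :
    degreeOf i (Pm a b c p) ≤ degreeOf i p := by
  conv_lhs => rw [p.as_sum]
  rw [map_sum]
  refine (degreeOf_sum_le _ _ _).trans ?_
  refine Finset.sup_le fun m hm => ?_
  refine le_trans ?_ (monomial_le_degreeOf i hm)
  rw [monomial_eq, map_mul]
  refine (degreeOf_mul_le _ _ _).trans ?_
  have hC : (Pm a b c : MvPolynomial (Fin 3) K →ₐ[K] _) (C (coeff m p)) = C (coeff m p) := by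
    simp [Pm, algHom_C]
  rw [hC, degreeOf_C, zero_add]
  rw [Finsupp.prod, map_prod]
  refine (degreeOf_prod_le _ _ _).trans ?_
  have hterm : ∀ j ∈ m.support,
      degreeOf i ((Pm a b c : MvPolynomial (Fin 3) K →ₐ[K] _) (X j ^ m j))
        ≤ if i = j then m j else 0 := by
    intro j _
    rw [map_pow]
    refine (degreeOf_pow_le _ _ _).trans ?_
    have := degreeOf_Pm_X_le (K := K) a b c i j
    by_cases h : i = j
    · subst h
      simp only [if_pos rfl]
      calc m i * degreeOf i ((Pm a b c : MvPolynomial (Fin 3) K →ₐ[K] _) (X i))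
          ≤ m i * 1 := Nat.mul_le_mul_left _ (by simpa using this)
        _ = m i := mul_one _
    · simp only [h, if_false] at this ⊢
      simp [Nat.le_zero.mp this]
  refine (Finset.sum_le_sum hterm).trans ?_
  rw [Finset.sum_ite_eq m.support i (fun j => m j)]
  split <;> simp

lemma toF3_injective : Function.Injective (toF3 K) :=
  IsFractionRing.injective _ _

lemma toF3_mul (p q : MvPolynomial (Fin 3) K) : toF3 K (p * q) = toF3 K p * toF3 K q :=
  map_mul (algebraMap (MvPolynomial (Fin 3) K) (F3 K)) _ _

lemma toF3_pow (p : MvPolynomial (Fin 3) K) (n : ℕ) : toF3 K (p ^ n) = toF3 K p ^ n :=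
  map_pow (algebraMap (MvPolynomial (Fin 3) K) (F3 K)) _ _

lemma xv_mem : xv K ∈ IntermediateField.adjoin K {xv K} :=
  IntermediateField.subset_adjoin K _ rfl

lemma toF3_C_int (t : ℤ) : toF3 K (C ((t : ℤ) : K)) = ((t : ℤ) : F3 K) := by
  rw [toF3, ← MvPolynomial.algebraMap_eq, ← IsScalarTower.algebraMap_apply, map_intCast]

/-- A `K`-algebra automorphism of `K(x,y,z)` is determined on polynomials by its values on
the variables. -/
lemma equiv_toF3 (τ : F3 K ≃ₐ[K] F3 K) (v : Fin 3 → MvPolynomial (Fin 3) K)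
    (h : ∀ i, τ (toF3 K (X i)) = toF3 K (v i)) (p : MvPolynomial (Fin 3) K) :
    τ (toF3 K p) = toF3 K (aeval v p) := by
  have h2 : (↑τ : F3 K →ₐ[K] F3 K).comp (IsScalarTower.toAlgHom K (MvPolynomial (Fin 3) K) (F3 K))
      = (IsScalarTower.toAlgHom K (MvPolynomial (Fin 3) K) (F3 K)).comp (aeval v) := by
    apply algHom_ext
    intro i
    simpa [toF3] using h i
  exact DFunLike.congr_fun h2 p

lemma pow_fixed (σ : F3 K ≃ₐ[K] F3 K) (u : F3 K) (h : σ u = u) (n : ℕ) : (σ ^ n) u = u := by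
  induction n with
  | zero => rfl
  | succ n ih => rw [pow_succ, AlgEquiv.mul_apply, h, ih]

lemma inv_fixed (τ : F3 K ≃ₐ[K] F3 K) (u : F3 K) (h : τ u = u) : τ⁻¹ u = u := by
  apply τ.injective
  calc τ (τ⁻¹ u) = (τ * τ⁻¹) u := (AlgEquiv.mul_apply _ _ _).symm
    _ = u := by rw [mul_inv_cancel]; rfl
    _ = τ u := h.symm

lemma zpow_fixed (σ : F3 K ≃ₐ[K] F3 K) (u : F3 K) (h : σ u = u) (t : ℤ) : (σ ^ t) u = u := by
  cases t with
  | ofNat n => rw [Int.ofNat_eq_coe, zpow_natCast]; exact pow_fixed σ u h n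
  | negSucc n =>
      rw [zpow_negSucc]
      exact inv_fixed _ u (pow_fixed σ u h (n + 1))

lemma pow_shift (σ : F3 K ≃ₐ[K] F3 K) (u : F3 K) (h : σ u = u + 1) (n : ℕ) :
    (σ ^ n) u = u + (n : F3 K) := by
  induction n with
  | zero => simp
  | succ n ih =>
      rw [pow_succ', AlgEquiv.mul_apply, ih, map_add, h, map_natCast]
      push_cast
      ring

lemma zpow_shift (σ : F3 K ≃ₐ[K] F3 K) (u : F3 K) (h : σ u = u + 1) (t : ℤ) :
    (σ ^ t) u = u + (t : F3 K) := by
  cases t with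
  | ofNat n => rw [Int.ofNat_eq_coe, zpow_natCast, pow_shift σ u h n]; push_cast; ring
  | negSucc n =>
      rw [zpow_negSucc]
      have key : (σ ^ (n + 1)) (u - ((n : F3 K) + 1)) = u := by
        rw [map_sub, pow_shift σ u h (n + 1), map_add, map_natCast, map_one]
        push_cast
        ring
      have h2 : (σ ^ (n + 1))⁻¹ u = u - ((n : F3 K) + 1) := by
        apply (σ ^ (n + 1)).injective
        calc (σ ^ (n+1)) ((σ ^ (n + 1))⁻¹ u) = ((σ ^ (n+1)) * (σ ^ (n + 1))⁻¹) u :=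
              (AlgEquiv.mul_apply _ _ _).symm
          _ = u := by rw [mul_inv_cancel]; rfl
          _ = (σ ^ (n+1)) (u - ((n : F3 K) + 1)) := key.symm
      rw [h2, Int.cast_negSucc]
      push_cast
      ring

/-- Telescoping: `σ^t w - w` is always in the image of `Δ_σ`. -/
lemma exact_pow (σ : F3 K ≃ₐ[K] F3 K) (w : F3 K) (n : ℕ) :
    ∃ g, (σ ^ n) w - w = σ g - g := by
  induction n with
  | zero => exact ⟨0, by simp⟩
  | succ n ih =>
      obtain ⟨g, hg⟩ := ih
      refine ⟨g + (σ ^ n) w, ?_⟩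
      rw [map_add]
      have hs : (σ ^ (n+1)) w = σ ((σ ^ n) w) := by rw [pow_succ', AlgEquiv.mul_apply]
      rw [hs]
      linear_combination hg

lemma exact_zpow (σ : F3 K ≃ₐ[K] F3 K) (w : F3 K) (t : ℤ) :
    ∃ g, (σ ^ t) w - w = σ g - g := by
  cases t with
  | ofNat n => rw [Int.ofNat_eq_coe, zpow_natCast]; exact exact_pow σ w n
  | negSucc n =>
      rw [zpow_negSucc]
      obtain ⟨g, hg⟩ := exact_pow σ ((σ ^ (n+1))⁻¹ w) (n + 1)
      have hw : (σ ^ (n+1)) ((σ ^ (n+1))⁻¹ w) = w := by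
        calc (σ ^ (n+1)) ((σ ^ (n + 1))⁻¹ w) = ((σ ^ (n+1)) * (σ ^ (n + 1))⁻¹) w :=
              (AlgEquiv.mul_apply _ _ _).symm
          _ = w := by rw [mul_inv_cancel]; rfl
      rw [hw] at hg
      exact ⟨-g, by rw [map_neg]; linear_combination -hg⟩

/-- Any element of `K(x)` is fixed by an automorphism fixing `x`. -/
lemma fix_of_mem_adjoin (σ : F3 K ≃ₐ[K] F3 K) (hx : σ (xv K) = xv K) {u : F3 K}
    (hu : u ∈ IntermediateField.adjoin K {xv K}) : σ u = u := by
  induction hu using IntermediateField.adjoin_induction with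
  | mem x hx' => rw [Set.mem_singleton_iff] at hx'; rw [hx']; exact hx
  | algebraMap x => exact σ.commutes x
  | add x y _ _ hx' hy' => rw [map_add, hx', hy']
  | inv x _ hx' => rw [map_inv₀, hx']
  | mul x y _ _ hx' hy' => rw [map_mul, hx', hy']

/-- The `z`-shift fixes polynomials in `K[x,y]`. -/
lemma Pm_z_supported {c : MvPolynomial (Fin 3) K}
    (hc : c ∈ MvPolynomial.supported K ({0, 1} : Set (Fin 3))) (γ : ℤ) :
    Pm 0 0 γ c = c := by
  rw [supported_eq_range_rename] at hc
  obtain ⟨c', rfl⟩ := hc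
  show aeval _ (rename _ c') = _
  rw [aeval_rename]
  have h : (aeval (![X 0 + C ((0:ℤ) : K), X 1 + C ((0:ℤ) : K), X 2 + C (γ : K)]
        ∘ (Subtype.val : ({0,1} : Set (Fin 3)) → Fin 3)) :
        MvPolynomial ({0,1} : Set (Fin 3)) K →ₐ[K] MvPolynomial (Fin 3) K)
      = rename Subtype.val := by
    apply algHom_ext
    intro i
    obtain hi | hi := i.2
    · simp [Function.comp, show (i : Fin 3) = 0 from hi]
    · simp [Function.comp, show (i : Fin 3) = 1 from hi]
  exact DFunLike.congr_fun h c'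

/-- Iterating a shift relation. -/
lemma iter3_nat {u : MvPolynomial (Fin 3) K} {α β γ α' β' γ' : ℤ}
    (h : Pm α β γ u = Pm α' β' γ' u) (s : ℕ) :
    Pm (s * α) (s * β) (s * γ) u = Pm (s * α') (s * β') (s * γ') u := by
  induction s with
  | zero => simp
  | succ s ih =>
      calc Pm ((s+1 : ℕ) * α) ((s+1 : ℕ) * β) ((s+1 : ℕ) * γ) u
          = Pm (α + s * α) (β + s * β) (γ + s * γ) u :=
            Pm_congr (by push_cast; ring) (by push_cast; ring) (by push_cast; ring) u
        _ = Pm α β γ (Pm (s * α) (s * β) (s * γ) u) := (Pm_comp _ _ _ _ _ _ _).symm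
        _ = Pm α β γ (Pm (s * α') (s * β') (s * γ') u) := by rw [ih]
        _ = Pm (s * α' + α) (s * β' + β) (s * γ' + γ) u := by
            rw [Pm_comp]; exact Pm_congr (by ring) (by ring) (by ring) u
        _ = Pm (s * α') (s * β') (s * γ') (Pm α β γ u) := (Pm_comp _ _ _ _ _ _ _).symm
        _ = Pm (s * α') (s * β') (s * γ') (Pm α' β' γ' u) := by rw [h]
        _ = Pm ((s+1 : ℕ) * α') ((s+1 : ℕ) * β') ((s+1 : ℕ) * γ') u := by
            rw [Pm_comp]; exact Pm_congr (by push_cast; ring) (by push_cast; ring)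
              (by push_cast; ring) u

lemma neg3 {u : MvPolynomial (Fin 3) K} {α β γ α' β' γ' : ℤ}
    (h : Pm α β γ u = Pm α' β' γ' u) :
    Pm (-α) (-β) (-γ) u = Pm (-α') (-β') (-γ') u := by
  calc Pm (-α) (-β) (-γ) u
      = Pm (-α - α') (-β - β') (-γ - γ') (Pm α' β' γ' u) := by
        rw [Pm_comp]; exact Pm_congr (by ring) (by ring) (by ring) u
    _ = Pm (-α - α') (-β - β') (-γ - γ') (Pm α β γ u) := by rw [h]
    _ = Pm (-α') (-β') (-γ') u := by
        rw [Pm_comp]; exact Pm_congr (by ring) (by ring) (by ring) u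

lemma iter3 {u : MvPolynomial (Fin 3) K} {α β γ α' β' γ' : ℤ}
    (h : Pm α β γ u = Pm α' β' γ' u) (s : ℤ) :
    Pm (s * α) (s * β) (s * γ) u = Pm (s * α') (s * β') (s * γ') u := by
  cases s with
  | ofNat n =>
      have := iter3_nat h n
      calc Pm ((Int.ofNat n) * α) _ _ u = Pm (n * α) (n * β) (n * γ) u :=
            Pm_congr (by rw [Int.ofNat_eq_coe]) (by rw [Int.ofNat_eq_coe])
              (by rw [Int.ofNat_eq_coe]) u
        _ = Pm (n * α') (n * β') (n * γ') u := this
        _ = Pm ((Int.ofNat n) * α') _ _ u :=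
            Pm_congr (by rw [Int.ofNat_eq_coe]) (by rw [Int.ofNat_eq_coe])
              (by rw [Int.ofNat_eq_coe]) u
  | negSucc n =>
      have := iter3_nat (neg3 h) (n + 1)
      calc Pm ((Int.negSucc n) * α) _ _ u
          = Pm ((n+1 : ℕ) * (-α)) ((n+1 : ℕ) * (-β)) ((n+1 : ℕ) * (-γ)) u :=
            Pm_congr (by rw [Int.negSucc_eq]; push_cast; ring)
              (by rw [Int.negSucc_eq]; push_cast; ring)
              (by rw [Int.negSucc_eq]; push_cast; ring) u
        _ = Pm ((n+1 : ℕ) * (-α')) ((n+1 : ℕ) * (-β')) ((n+1 : ℕ) * (-γ')) u := this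
        _ = Pm ((Int.negSucc n) * α') _ _ u :=
            Pm_congr (by rw [Int.negSucc_eq]; push_cast; ring)
              (by rw [Int.negSucc_eq]; push_cast; ring)
              (by rw [Int.negSucc_eq]; push_cast; ring) u

/-- A finite sum of `(Δ_y, Δ_z)`-exact elements is exact. -/
lemma exact_sum (σy σz : F3 K ≃ₐ[K] F3 K) {ι : Type*} (s : Finset ι) (F : ι → F3 K)
    (hF : ∀ i ∈ s, ∃ g h, F i = (σy g - g) + (σz h - h)) :
    ∃ g h, ∑ i ∈ s, F i = (σy g - g) + (σz h - h) := by
  classical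
  induction s using Finset.induction_on with
  | empty => exact ⟨0, 0, by simp⟩
  | insert a s ha ih =>
      obtain ⟨g1, h1, e1⟩ := hF a (Finset.mem_insert_self a s)
      obtain ⟨g2, h2, e2⟩ := ih (fun i hi => hF i (Finset.mem_insert_of_mem hi))
      refine ⟨g1 + g2, h1 + h2, ?_⟩
      rw [Finset.sum_insert ha, e1, e2, map_add, map_add]
      ring

/-- Membership in the span of the standard monomials over `K(x)`. -/
lemma mem_span (dy dz : ℕ) (D : F3 K) {q : MvPolynomial (Fin 3) K}
    (h1 : degreeOf 1 q ≤ dy) (h2 : degreeOf 2 q ≤ dz) :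
    toF3 K q / D ∈ Submodule.span (IntermediateField.adjoin K {xv K})
      (((Finset.range (dy+1) ×ˢ Finset.range (dz+1)).image
        (fun il : ℕ × ℕ => toF3 K (X 1 ^ il.1 * X 2 ^ il.2) / D) : Finset (F3 K)) :
          Set (F3 K)) := by
  have hsum : toF3 K q = ∑ m ∈ q.support, toF3 K (monomial m (coeff m q)) := by
    conv_lhs => rw [q.as_sum]
    exact map_sum (algebraMap (MvPolynomial (Fin 3) K) (F3 K)) _ _
  rw [hsum, Finset.sum_div]
  refine Submodule.sum_mem _ fun m hm => ?_
  have hmono : monomial m (coeff m q) =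
      (C (coeff m q) * X 0 ^ m 0) * (X 1 ^ m 1 * X 2 ^ m 2) := by
    rw [monomial_eq, Finsupp.prod_fintype _ _ (fun i => pow_zero _), Fin.prod_univ_three]
    ring
  rw [hmono, toF3_mul, mul_div_assoc]
  have hscal : toF3 K (C (coeff m q) * X 0 ^ m 0) ∈ IntermediateField.adjoin K {xv K} := by
    rw [toF3_mul, toF3_pow]
    have hx0 : toF3 K (X 0) = xv K := rfl
    rw [hx0]
    have hCm : toF3 K (C (coeff m q)) = algebraMap K (F3 K) (coeff m q) := by
      rw [toF3, ← MvPolynomial.algebraMap_eq, ← IsScalarTower.algebraMap_apply]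
    rw [hCm]
    exact mul_mem (IntermediateField.algebraMap_mem _ _) (pow_mem xv_mem (m 0))
  have hbase : toF3 K (X 1 ^ m 1 * X 2 ^ m 2) / D ∈
      (((Finset.range (dy+1) ×ˢ Finset.range (dz+1)).image
        (fun il : ℕ × ℕ => toF3 K (X 1 ^ il.1 * X 2 ^ il.2) / D) : Finset (F3 K)) :
          Set (F3 K)) := by
    rw [Finset.coe_image]
    refine ⟨(m 1, m 2), ?_, rfl⟩
    rw [Finset.coe_product]
    constructor <;> simp only [Finset.coe_range, Set.mem_Iio]
    · exact Nat.lt_succ_of_le ((monomial_le_degreeOf 1 hm).trans h1)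
    · exact Nat.lt_succ_of_le ((monomial_le_degreeOf 2 hm).trans h2)
  exact Submodule.smul_mem _ (⟨_, hscal⟩ : IntermediateField.adjoin K {xv K})
    (Submodule.subset_span hbase)

lemma toF3_add (p q : MvPolynomial (Fin 3) K) : toF3 K (p + q) = toF3 K p + toF3 K q :=
  map_add (algebraMap (MvPolynomial (Fin 3) K) (F3 K)) _ _

/-- The fundamental bridge: integer powers of the shift automorphisms act on polynomials
as the polynomial shift `Pm`. -/
lemma shift_toF3 (σx σy σz : F3 K ≃ₐ[K] F3 K)
    (hσx1 : σx (xv K) = xv K + 1) (hσx2 : σx (yv K) = yv K) (hσx3 : σx (zv K) = zv K)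
    (hσy1 : σy (xv K) = xv K) (hσy2 : σy (yv K) = yv K + 1) (hσy3 : σy (zv K) = zv K)
    (hσz1 : σz (xv K) = xv K) (hσz2 : σz (yv K) = yv K) (hσz3 : σz (zv K) = zv K + 1)
    (a b c : ℤ) (p : MvPolynomial (Fin 3) K) :
    (σx ^ a) ((σy ^ b) ((σz ^ c) (toF3 K p))) = toF3 K (Pm a b c p) := by
  have hτ : ∀ u, ((σx ^ a) * ((σy ^ b) * (σz ^ c))) u = (σx ^ a) ((σy ^ b) ((σz ^ c) u)) := by
    intro u
    rw [AlgEquiv.mul_apply, AlgEquiv.mul_apply]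
  have hgen : ∀ i, ((σx ^ a) * ((σy ^ b) * (σz ^ c))) (toF3 K (X i))
      = toF3 K (![X 0 + C ((a : ℤ) : K), X 1 + C ((b : ℤ) : K), X 2 + C ((c : ℤ) : K)] i) := by
    intro i
    rw [hτ]
    fin_cases i
    · show (σx ^ a) ((σy ^ b) ((σz ^ c) (xv K))) = toF3 K (X 0 + C ((a : ℤ) : K))
      rw [zpow_fixed σz _ hσz1 c, zpow_fixed σy _ hσy1 b, zpow_shift σx _ hσx1 a,
        toF3_add, toF3_C_int]
      rfl
    · show (σx ^ a) ((σy ^ b) ((σz ^ c) (yv K))) = toF3 K (X 1 + C ((b : ℤ) : K))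
      rw [zpow_fixed σz _ hσz2 c, zpow_shift σy _ hσy2 b, map_add, zpow_fixed σx _ hσx2 a,
        map_intCast, toF3_add, toF3_C_int]
      rfl
    · show (σx ^ a) ((σy ^ b) ((σz ^ c) (zv K))) = toF3 K (X 2 + C ((c : ℤ) : K))
      rw [zpow_shift σz _ hσz3 c, map_add, zpow_fixed σy _ hσy3 b, map_intCast, map_add,
        zpow_fixed σx _ hσx3 a, map_intCast, toF3_add, toF3_C_int]
      rfl
  have := equiv_toF3 ((σx ^ a) * ((σy ^ b) * (σz ^ c)))
    ![X 0 + C ((a : ℤ) : K), X 1 + C ((b : ℤ) : K), X 2 + C ((c : ℤ) : K)] hgen p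
  rw [hτ] at this
  exact this

end TeleAux

open TeleAux

/-- **Sufficiency for telescopers of type `(S_x, Δ_y, Δ_z)`.**
Let `f = b/(c·d^λ)` with `λ ≥ 1`, `c ∈ K[x,y]` nonzero, `b, d ∈ K[x,y,z]`, `d ≠ 0`,
`deg_z b < deg_z d`.  If (1) `σ_x^m d = σ_y^n (σ_z^k d)` for some integers `m > 0`, `n`,
`k`, (2) `σ_y^{n₁} d = σ_z^{k₁} d` for some integers `n₁ > 0`, `k₁`, and
(3) `σ_x^{m₂} c = σ_y^{n₂} c` for some integers `m₂ > 0`, `n₂`, then `f` has a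
telescoper of type `(S_x, Δ_y, Δ_z)`. -/
theorem hasTelescoperSxΔyΔz_of_invariance_conditions
    (K : Type*) [Field K] [CharZero K]
    (σx σy σz : F3 K ≃ₐ[K] F3 K)
    (hσx1 : σx (xv K) = xv K + 1) (hσx2 : σx (yv K) = yv K) (hσx3 : σx (zv K) = zv K)
    (hσy1 : σy (xv K) = xv K) (hσy2 : σy (yv K) = yv K + 1) (hσy3 : σy (zv K) = zv K)
    (hσz1 : σz (xv K) = xv K) (hσz2 : σz (yv K) = yv K) (hσz3 : σz (zv K) = zv K + 1)
    (lam : ℕ) (hlam : 1 ≤ lam)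
    (b c d : MvPolynomial (Fin 3) K)
    (hcxy : c ∈ MvPolynomial.supported K ({0, 1} : Set (Fin 3))) (hc : c ≠ 0)
    (hd0 : d ≠ 0)
    (hdeg : b.degreeOf 2 < d.degreeOf 2)
    (h1 : ∃ m n k : ℤ, 0 < m ∧ (σx ^ m) (toF3 K d) = (σy ^ n) ((σz ^ k) (toF3 K d)))
    (h2 : ∃ n₁ k₁ : ℤ, 0 < n₁ ∧ (σy ^ n₁) (toF3 K d) = (σz ^ k₁) (toF3 K d))
    (h3 : ∃ m₂ n₂ : ℤ, 0 < m₂ ∧ (σx ^ m₂) (toF3 K c) = (σy ^ n₂) (toF3 K c)) :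
    HasTelescoperSxΔyΔz K σx σy σz (toF3 K b / (toF3 K c * toF3 K d ^ lam)) := by
  classical
  set Dden : F3 K := toF3 K c * toF3 K d ^ lam with hDden
  obtain ⟨m, n, k, hm, h1⟩ := h1
  obtain ⟨n₁, k₁, hn₁, h2⟩ := h2
  obtain ⟨m₂, n₂, hm₂, h3⟩ := h3
  -- bridge specializations
  have key := shift_toF3 σx σy σz hσx1 hσx2 hσx3 hσy1 hσy2 hσy3 hσz1 hσz2 hσz3
  have keyx : ∀ (a : ℤ) (p : MvPolynomial (Fin 3) K),
      (σx ^ a) (toF3 K p) = toF3 K (Pm a 0 0 p) := by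
    intro a p
    have h := key a 0 0 p
    simpa using h
  have keyyz : ∀ (b' c' : ℤ) (p : MvPolynomial (Fin 3) K),
      (σy ^ b') ((σz ^ c') (toF3 K p)) = toF3 K (Pm 0 b' c' p) := by
    intro b' c' p
    have h := key 0 b' c' p
    simpa using h
  have keyy : ∀ (b' : ℤ) (p : MvPolynomial (Fin 3) K),
      (σy ^ b') (toF3 K p) = toF3 K (Pm 0 b' 0 p) := by
    intro b' p
    have h := keyyz b' 0 p
    simpa using h
  have keyz : ∀ (c' : ℤ) (p : MvPolynomial (Fin 3) K),
      (σz ^ c') (toF3 K p) = toF3 K (Pm 0 0 c' p) := by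
    intro c' p
    have h := keyyz 0 c' p
    simpa using h
  -- polynomial versions of the hypotheses
  have hd1 : (Pm m 0 0 : MvPolynomial (Fin 3) K →ₐ[K] _) d = Pm 0 n k d :=
    toF3_injective (by rw [← keyx, ← keyyz]; exact h1)
  have hd2 : (Pm 0 n₁ 0 : MvPolynomial (Fin 3) K →ₐ[K] _) d = Pm 0 0 k₁ d :=
    toF3_injective (by rw [← keyy, ← keyz]; exact h2)
  have hc3 : (Pm m₂ 0 0 : MvPolynomial (Fin 3) K →ₐ[K] _) c = Pm 0 n₂ 0 c :=
    toF3_injective (by rw [← keyx, ← keyy]; exact h3)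
  have hd2' : (Pm 0 n₁ (-k₁) : MvPolynomial (Fin 3) K →ₐ[K] _) d = Pm 0 0 0 d := by
    calc (Pm 0 n₁ (-k₁) : MvPolynomial (Fin 3) K →ₐ[K] _) d
        = Pm 0 0 (-k₁) (Pm 0 n₁ 0 d) := by
          rw [Pm_comp]; exact Pm_congr (by ring) (by ring) (by ring) d
      _ = Pm 0 0 (-k₁) (Pm 0 0 k₁ d) := by rw [hd2]
      _ = Pm 0 0 0 d := by rw [Pm_comp]; exact Pm_congr (by ring) (by ring) (by ring) d
  -- the common shift data
  set t0 : ℤ := m * n₂ - m₂ * n with ht0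
  set M : ℤ := m * m₂ * n₁ with hMdef
  set A : ℤ := m * n₁ * n₂ with hAdef
  set B : ℤ := m₂ * n₁ * k - k₁ * t0 with hBdef
  have hMpos : 0 < M := by positivity
  set Mn : ℕ := M.toNat with hMndef
  have hMn : (Mn : ℤ) = M := Int.toNat_of_nonneg hMpos.le
  have hMnpos : 0 < Mn := by omega
  have hcj : ∀ s : ℤ, (Pm (s * M) 0 0 : MvPolynomial (Fin 3) K →ₐ[K] _) c = Pm 0 (s * A) 0 c := by
    intro s
    have h := iter3 hc3 (s * (m * n₁))
    calc (Pm (s * M) 0 0 : MvPolynomial (Fin 3) K →ₐ[K] _) c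
        = Pm ((s * (m * n₁)) * m₂) ((s * (m * n₁)) * 0) ((s * (m * n₁)) * 0) c :=
          Pm_congr (by ring) (by ring) (by ring) c
      _ = Pm ((s * (m * n₁)) * 0) ((s * (m * n₁)) * n₂) ((s * (m * n₁)) * 0) c := h
      _ = Pm 0 (s * A) 0 c := Pm_congr (by ring) (by ring) (by ring) c
  have hdj : ∀ s : ℤ,
      (Pm (s * M) 0 0 : MvPolynomial (Fin 3) K →ₐ[K] _) d = Pm 0 (s * A) (s * B) d := by
    intro s
    have h1' := iter3 hd1 (s * (m₂ * n₁))
    have h2' := iter3 hd2' (s * t0)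
    have hfix : (Pm 0 (s * t0 * n₁) (-(s * t0 * k₁)) : MvPolynomial (Fin 3) K →ₐ[K] _) d = d := by
      calc (Pm 0 (s * t0 * n₁) (-(s * t0 * k₁)) : MvPolynomial (Fin 3) K →ₐ[K] _) d
          = Pm ((s * t0) * 0) ((s * t0) * n₁) ((s * t0) * (-k₁)) d :=
            Pm_congr (by ring) (by ring) (by ring) d
        _ = Pm ((s * t0) * 0) ((s * t0) * 0) ((s * t0) * 0) d := h2'
        _ = Pm 0 0 0 d := Pm_congr (by ring) (by ring) (by ring) d
        _ = d := Pm_zero d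
    calc (Pm (s * M) 0 0 : MvPolynomial (Fin 3) K →ₐ[K] _) d
        = Pm ((s * (m₂ * n₁)) * m) ((s * (m₂ * n₁)) * 0) ((s * (m₂ * n₁)) * 0) d :=
          Pm_congr (by ring) (by ring) (by ring) d
      _ = Pm ((s * (m₂ * n₁)) * 0) ((s * (m₂ * n₁)) * n) ((s * (m₂ * n₁)) * k) d := h1'
      _ = Pm 0 (s * (m₂ * n₁) * n) (s * (m₂ * n₁) * k) d :=
          Pm_congr (by ring) (by ring) (by ring) d
      _ = Pm 0 (s * (m₂ * n₁) * n) (s * (m₂ * n₁) * k)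
            (Pm 0 (s * t0 * n₁) (-(s * t0 * k₁)) d) := by rw [hfix]
      _ = Pm 0 (s * A) (s * B) d := by
          rw [Pm_comp]; exact Pm_congr (by ring) (by ring) (by ring) d
  -- the shifted numerators
  have main : ∀ j : ℕ,
      (σx ^ (j * Mn)) (toF3 K b / Dden) =
        (σy ^ ((j : ℤ) * A)) ((σz ^ ((j : ℤ) * B))
          (toF3 K (Pm ((j : ℤ) * M) (-((j : ℤ) * A)) (-((j : ℤ) * B)) b) / Dden)) := by
    intro j
    rw [hDden]
    have hcast : ((j * Mn : ℕ) : ℤ) = (j : ℤ) * M := by push_cast [hMn]; ring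
    have hx : (σx ^ (j * Mn) : F3 K ≃ₐ[K] F3 K) = σx ^ ((j : ℤ) * M) := by
      rw [← zpow_natCast, hcast]
    rw [hx]
    simp only [map_div₀, map_mul, map_pow]
    rw [keyx ((j : ℤ) * M) b, keyx ((j : ℤ) * M) c, keyx ((j : ℤ) * M) d,
      keyyz ((j : ℤ) * A) ((j : ℤ) * B) (Pm ((j : ℤ) * M) (-((j : ℤ) * A)) (-((j : ℤ) * B)) b),
      keyyz ((j : ℤ) * A) ((j : ℤ) * B) c, keyyz ((j : ℤ) * A) ((j : ℤ) * B) d]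
    have e1 : (Pm 0 ((j : ℤ) * A) ((j : ℤ) * B) : MvPolynomial (Fin 3) K →ₐ[K] _)
        (Pm ((j : ℤ) * M) (-((j : ℤ) * A)) (-((j : ℤ) * B)) b) = Pm ((j : ℤ) * M) 0 0 b := by
      rw [Pm_comp]; exact Pm_congr (by ring) (by ring) (by ring) b
    have e2 : (Pm 0 ((j : ℤ) * A) ((j : ℤ) * B) : MvPolynomial (Fin 3) K →ₐ[K] _) c
        = Pm ((j : ℤ) * M) 0 0 c := by
      calc (Pm 0 ((j : ℤ) * A) ((j : ℤ) * B) : MvPolynomial (Fin 3) K →ₐ[K] _) c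
          = Pm 0 ((j : ℤ) * A) 0 (Pm 0 0 ((j : ℤ) * B) c) := by
            rw [Pm_comp]; exact Pm_congr (by ring) (by ring) (by ring) c
        _ = Pm 0 ((j : ℤ) * A) 0 c := by rw [Pm_z_supported hcxy]
        _ = Pm ((j : ℤ) * M) 0 0 c := (hcj (j : ℤ)).symm
    have e3 : (Pm 0 ((j : ℤ) * A) ((j : ℤ) * B) : MvPolynomial (Fin 3) K →ₐ[K] _) d
        = Pm ((j : ℤ) * M) 0 0 d := (hdj (j : ℤ)).symm
    rw [e1, e2, e3]
  -- the finite-dimensional span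
  set S : Finset (F3 K) := (Finset.range (b.degreeOf 1 + 1) ×ˢ Finset.range (b.degreeOf 2 + 1)).image
      (fun il : ℕ × ℕ => toF3 K (X 1 ^ il.1 * X 2 ^ il.2) / Dden) with hS
  set V := Submodule.span (IntermediateField.adjoin K {xv K}) (S : Set (F3 K)) with hV
  haveI : FiniteDimensional (IntermediateField.adjoin K {xv K}) V :=
    FiniteDimensional.span_of_finite _ S.finite_toSet
  have hvmem : ∀ j : ℕ,
      toF3 K (Pm ((j : ℤ) * M) (-((j : ℤ) * A)) (-((j : ℤ) * B)) b) / Dden ∈ V :=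
    fun j => mem_span _ _ _ (degreeOf_Pm_le _ _ _ 1 b) (degreeOf_Pm_le _ _ _ 2 b)
  set Nc : ℕ := S.card with hNc
  set w : Fin (Nc + 1) → V := fun j => ⟨_, hvmem (j : ℕ)⟩ with hw
  have hnli : ¬ LinearIndependent (IntermediateField.adjoin K {xv K}) w := by
    intro hli
    have hcard := hli.fintype_card_le_finrank
    have hrank : Module.finrank (IntermediateField.adjoin K {xv K}) V ≤ Nc :=
      finrank_span_finset_le_card S
    rw [Fintype.card_fin] at hcard
    omega
  obtain ⟨g, hg0, j0, hj0⟩ := Fintype.not_linearIndependent_iff.mp hnli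
  have hgsum : ∑ i : Fin (Nc + 1), (g i : F3 K) *
      (toF3 K (Pm (((i : ℕ) : ℤ) * M) (-(((i : ℕ) : ℤ) * A)) (-(((i : ℕ) : ℤ) * B)) b) / Dden)
      = 0 := by
    have h4 := congrArg (V.subtype) hg0
    rw [map_sum, map_zero] at h4
    have h5 : ∀ i : Fin (Nc + 1), V.subtype (g i • w i) = (g i : F3 K) *
        (toF3 K (Pm (((i : ℕ) : ℤ) * M) (-(((i : ℕ) : ℤ) * A)) (-(((i : ℕ) : ℤ) * B)) b) / Dden) :=
      fun i => rfl
    calc ∑ i : Fin (Nc + 1), (g i : F3 K) *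
        (toF3 K (Pm (((i : ℕ) : ℤ) * M) (-(((i : ℕ) : ℤ) * A)) (-(((i : ℕ) : ℤ) * B)) b) / Dden)
        = ∑ i : Fin (Nc + 1), V.subtype (g i • w i) :=
          Finset.sum_congr rfl fun i _ => (h5 i).symm
      _ = 0 := h4
  have hfixgy : ∀ i : Fin (Nc + 1), σy (g i : F3 K) = (g i : F3 K) :=
    fun i => fix_of_mem_adjoin σy hσy1 (g i).2
  have hfixgz : ∀ i : Fin (Nc + 1), σz (g i : F3 K) = (g i : F3 K) :=
    fun i => fix_of_mem_adjoin σz hσz1 (g i).2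
  -- assemble the telescoper
  set E : ℕ → F3 K := fun i =>
    if h : Mn ∣ i ∧ i / Mn < Nc + 1 then (g ⟨i / Mn, h.2⟩ : F3 K) else 0 with hE
  have hEdef : ∀ i : ℕ, E i =
      if h : Mn ∣ i ∧ i / Mn < Nc + 1 then (g ⟨i / Mn, h.2⟩ : F3 K) else 0 := fun _ => rfl
  have hE_eval : ∀ j : Fin (Nc + 1), E ((j : ℕ) * Mn) = (g j : F3 K) := by
    intro j
    have hcond : Mn ∣ (j : ℕ) * Mn ∧ ((j : ℕ) * Mn) / Mn < Nc + 1 := by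
      constructor
      · exact dvd_mul_left Mn (j : ℕ)
      · rw [Nat.mul_div_cancel _ hMnpos]; exact j.isLt
    rw [hEdef, dif_pos hcond]
    have : (⟨((j : ℕ) * Mn) / Mn, hcond.2⟩ : Fin (Nc + 1)) = j :=
      Fin.ext (Nat.mul_div_cancel _ hMnpos)
    rw [this]
  refine ⟨Nc * Mn, fun i => E (i : ℕ), ?_, ?_, ?_⟩
  · -- membership in K(x)
    intro i
    show E (i : ℕ) ∈ IntermediateField.adjoin K {xv K}
    rw [hEdef]
    split
    · exact (g _).2
    · exact zero_mem _
  · -- not all zero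
    refine ⟨⟨(j0 : ℕ) * Mn,
      Nat.lt_succ_of_le (Nat.mul_le_mul_right Mn (Nat.lt_succ_iff.mp j0.isLt))⟩, ?_⟩
    show E ((j0 : ℕ) * Mn) ≠ 0
    rw [hE_eval j0]
    exact fun hzero => hj0 (ZeroMemClass.coe_eq_zero.mp hzero)
  · -- the telescoped sum is exact
    show ∃ g h : F3 K, ∑ i : Fin (Nc * Mn + 1), E (i : ℕ) *
      (σx ^ ((i : ℕ))) (toF3 K b / Dden) = (σy g - g) + (σz h - h)
    have hstep1 : ∑ i : Fin (Nc * Mn + 1), E (i : ℕ) *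
        (σx ^ ((i : ℕ))) (toF3 K b / Dden) =
        ∑ i ∈ Finset.range (Nc * Mn + 1), E i *
        (σx ^ i) (toF3 K b / Dden) :=
      Fin.sum_univ_eq_sum_range (fun i => E i * (σx ^ i) (toF3 K b / Dden)) (Nc * Mn + 1)
    have himg : (Finset.range (Nc + 1)).image (fun j => j * Mn) ⊆ Finset.range (Nc * Mn + 1) := by
      intro i hi
      rw [Finset.mem_image] at hi
      obtain ⟨j, hj, rfl⟩ := hi
      rw [Finset.mem_range] at hj ⊢
      have : j * Mn ≤ Nc * Mn := Nat.mul_le_mul_right Mn (by omega)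
      omega
    have hzero_off : ∀ i ∈ Finset.range (Nc * Mn + 1),
        i ∉ (Finset.range (Nc + 1)).image (fun j => j * Mn) →
        E i * (σx ^ i) (toF3 K b / Dden) = 0 := by
      intro i hi hni
      rw [hEdef, dif_neg, zero_mul]
      intro hcond
      apply hni
      rw [Finset.mem_image]
      exact ⟨i / Mn, Finset.mem_range.mpr hcond.2, Nat.div_mul_cancel hcond.1⟩
    have hstep2 : ∑ i ∈ Finset.range (Nc * Mn + 1), E i *
        (σx ^ i) (toF3 K b / Dden) =
        ∑ i ∈ (Finset.range (Nc + 1)).image (fun j => j * Mn), E i *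
        (σx ^ i) (toF3 K b / Dden) :=
      (Finset.sum_subset himg hzero_off).symm
    have hstep3 : ∑ i ∈ (Finset.range (Nc + 1)).image (fun j => j * Mn), E i *
        (σx ^ i) (toF3 K b / Dden) =
        ∑ j ∈ Finset.range (Nc + 1), E (j * Mn) *
        (σx ^ (j * Mn)) (toF3 K b / Dden) :=
      Finset.sum_image (fun x _ y _ hxy => Nat.eq_of_mul_eq_mul_right hMnpos hxy)
    have hstep4 : ∑ j ∈ Finset.range (Nc + 1), E (j * Mn) *
        (σx ^ (j * Mn)) (toF3 K b / Dden) =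
        ∑ j : Fin (Nc + 1), E ((j : ℕ) * Mn) *
        (σx ^ ((j : ℕ) * Mn)) (toF3 K b / Dden) :=
      (Fin.sum_univ_eq_sum_range
        (fun j => E (j * Mn) * (σx ^ (j * Mn)) (toF3 K b / Dden)) _).symm
    rw [hstep1, hstep2, hstep3, hstep4]
    have hsplit : ∀ j : Fin (Nc + 1), E ((j : ℕ) * Mn) *
        (σx ^ ((j : ℕ) * Mn)) (toF3 K b / Dden) =
        (g j : F3 K) * ((σx ^ ((j : ℕ) * Mn)) (toF3 K b / Dden) -
          toF3 K (Pm (((j : ℕ) : ℤ) * M) (-(((j : ℕ) : ℤ) * A)) (-(((j : ℕ) : ℤ) * B)) b) / Dden)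
        + (g j : F3 K) *
          (toF3 K (Pm (((j : ℕ) : ℤ) * M) (-(((j : ℕ) : ℤ) * A)) (-(((j : ℕ) : ℤ) * B)) b) / Dden) := by
      intro j
      rw [hE_eval j]
      ring
    rw [Finset.sum_congr rfl (fun j _ => hsplit j), Finset.sum_add_distrib, hgsum, add_zero]
    refine exact_sum σy σz Finset.univ _ (fun j _ => ?_)
    obtain ⟨h1e, hh1⟩ := exact_zpow σz
      (toF3 K (Pm (((j : ℕ) : ℤ) * M) (-(((j : ℕ) : ℤ) * A)) (-(((j : ℕ) : ℤ) * B)) b) / Dden)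
      (((j : ℕ) : ℤ) * B)
    obtain ⟨g1e, hg1⟩ := exact_zpow σy
      ((σz ^ (((j : ℕ) : ℤ) * B))
        (toF3 K (Pm (((j : ℕ) : ℤ) * M) (-(((j : ℕ) : ℤ) * A)) (-(((j : ℕ) : ℤ) * B)) b) / Dden))
      (((j : ℕ) : ℤ) * A)
    refine ⟨(g j : F3 K) * g1e, (g j : F3 K) * h1e, ?_⟩
    rw [main (j : ℕ)]
    rw [map_mul, map_mul, hfixgy j, hfixgz j]
    linear_combination (g j : F3 K) * hg1 + (g j : F3 K) * hh1
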